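/- arXiv:2501.16315 — 3 statements merged into one kernel-verified Lean document; each statement's English description precedes it below -/
import Mathlib

section
/- Let μ be a probability measure on ℝⁿ, μ_N the empirical measure of an i.i.d. sample of size N, and S₁,…,S_m pairwise disjoint Borel sets with union T. Then 𝔼[∑_{j=1}^m |μ_N(S_j) − μ(S_j)|] ≤ (m μ(T)/N)^{1/2}. -/
open MeasureTheory Metric Set ProbabilityTheory
open scoped ENNReal

noncomputable section

/-- The empirical measure `μ_N = (1/N) ∑ᵢ δ_{Xᵢ(ω)}` associated with a sample `X`. -/
def empMeas {Ω : Type*} [MeasurableSpace Ω] {n N : ℕ}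
    (X : Fin N → Ω → EuclideanSpace ℝ (Fin n)) (ω : Ω) :
    Measure (EuclideanSpace ℝ (Fin n)) :=
  (N : ℝ≥0∞)⁻¹ • ∑ i : Fin N, Measure.dirac (X i ω)

/-- Cauchy–Schwarz: `E|g| ≤ √(E g²)` on a probability space. -/
lemma aux_abs_integral_le_sqrt {Ω : Type*} [MeasurableSpace Ω] (ν : Measure Ω)
    [IsProbabilityMeasure ν] {g : Ω → ℝ} (hg : MemLp g 2 ν) :
    ∫ ω, |g ω| ∂ν ≤ Real.sqrt (∫ ω, (g ω) ^ 2 ∂ν) := by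
  have hpq : Real.HolderConjugate 2 2 := by
    constructor <;> norm_num
  have h2 : (ENNReal.ofReal (2:ℝ)) = 2 := by norm_num
  have habs : MemLp (fun ω => |g ω|) (ENNReal.ofReal (2:ℝ)) ν := by
    rw [h2]; exact hg.abs
  have hone : MemLp (fun _ : Ω => (1:ℝ)) (ENNReal.ofReal (2:ℝ)) ν := by
    rw [h2]; exact memLp_const 1
  have := integral_mul_le_Lp_mul_Lq_of_nonneg hpq
    (ae_of_all ν fun ω => abs_nonneg (g ω)) (ae_of_all ν fun _ => zero_le_one) habs hone
  simp only [mul_one] at this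
  have h1 : (∫ a, (1:ℝ) ^ (2:ℝ) ∂ν) = 1 := by simp
  rw [h1] at this
  have h2' : (∫ a, |g a| ^ (2:ℝ) ∂ν) = ∫ a, (g a) ^ 2 ∂ν := by
    refine integral_congr_ae (ae_of_all ν fun a => ?_)
    show |g a| ^ (2:ℝ) = g a ^ 2
    rw [Real.rpow_two, sq_abs]
  rw [h2'] at this
  calc ∫ ω, |g ω| ∂ν ≤ (∫ a, (g a) ^ 2 ∂ν) ^ ((1:ℝ)/2) * (1:ℝ) ^ ((1:ℝ)/2) := this
    _ = Real.sqrt (∫ a, (g a) ^ 2 ∂ν) := by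
        rw [Real.one_rpow, mul_one, Real.sqrt_eq_rpow]

/-- `E|g - Eg| ≤ √(Var g)` on a probability space. -/
lemma aux_integral_abs_sub_le_sqrt_variance {Ω : Type*} [MeasurableSpace Ω] (ν : Measure Ω)
    [IsProbabilityMeasure ν] {g : Ω → ℝ} (hg : MemLp g 2 ν) :
    ∫ ω, |g ω - ∫ x, g x ∂ν| ∂ν ≤ Real.sqrt (variance g ν) := by
  have h2 : MemLp (g - fun _ => ∫ x, g x ∂ν) 2 ν := hg.sub (memLp_const _)
  have h := aux_abs_integral_le_sqrt ν h2
  rw [variance_eq_integral hg.aemeasurable]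
  simp only [Pi.sub_apply, Pi.pow_apply] at h ⊢
  exact h

lemma aux_empMeas_toReal {Ω : Type*} [MeasurableSpace Ω] {n N : ℕ}
    (X : Fin N → Ω → EuclideanSpace ℝ (Fin n)) (ω : Ω)
    {S : Set (EuclideanSpace ℝ (Fin n))} (hS : MeasurableSet S) :
    (empMeas X ω S).toReal
      = (N:ℝ)⁻¹ * ∑ i : Fin N, S.indicator (fun _ => (1:ℝ)) (X i ω) := by
  rw [empMeas, Measure.smul_apply, smul_eq_mul, Measure.finset_sum_apply, ENNReal.toReal_mul]
  congr 1
  · simp [ENNReal.toReal_inv]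
  rw [ENNReal.toReal_sum (fun i _ => measure_ne_top _ _)]
  refine Finset.sum_congr rfl fun i _ => ?_
  rw [Measure.dirac_apply' _ hS]
  by_cases h : X i ω ∈ S <;> simp [h]

/-- For pairwise disjoint Borel sets `S₁,…,S_m` with union `T`,
`𝔼[∑ⱼ |μ_N(Sⱼ) − μ(Sⱼ)|] ≤ (m μ(T)/N)^{1/2}`. -/
theorem stmt_6 {n N : ℕ} (hN : 0 < N) {Ω : Type*} [MeasurableSpace Ω]
    (P : Measure Ω) [IsProbabilityMeasure P]
    (μ : Measure (EuclideanSpace ℝ (Fin n))) [IsProbabilityMeasure μ]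
    (X : Fin N → Ω → EuclideanSpace ℝ (Fin n))
    (hmeas : ∀ i, Measurable (X i))
    (hindep : iIndepFun X P)
    (hid : ∀ i, P.map (X i) = μ)
    (m : ℕ) (Sj : Fin m → Set (EuclideanSpace ℝ (Fin n)))
    (hSmeas : ∀ j, MeasurableSet (Sj j))
    (hdisj : Pairwise (Function.onFun Disjoint Sj))
    (T : Set (EuclideanSpace ℝ (Fin n))) (hT : T = ⋃ j, Sj j) :
    (∫ ω, ∑ j : Fin m, |(empMeas X ω (Sj j)).toReal - (μ (Sj j)).toReal| ∂P)
      ≤ Real.sqrt (m * (μ T).toReal / N) := by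
  classical
  set g : Fin m → EuclideanSpace ℝ (Fin n) → ℝ :=
    fun j => (Sj j).indicator (fun _ => (1:ℝ)) with hgdef
  have hgmeas : ∀ j, Measurable (g j) := fun j => measurable_const.indicator (hSmeas j)
  have hg01 : ∀ j x, g j x ∈ Set.Icc (0:ℝ) 1 := by
    intro j x
    by_cases h : x ∈ Sj j <;> simp [hgdef, h]
  set p : Fin m → ℝ := fun j => (μ (Sj j)).toReal with hpdef
  set Y : Fin m → Fin N → Ω → ℝ := fun j i ω => g j (X i ω) with hYdef
  have hYmeas : ∀ j i, Measurable (Y j i) := fun j i => (hgmeas j).comp (hmeas i)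
  have hYL2 : ∀ j i, MemLp (Y j i) 2 P := fun j i =>
    memLp_of_bounded (ae_of_all _ fun ω => hg01 j (X i ω)) (hYmeas j i).aestronglyMeasurable 2
  have hYint : ∀ j i, ∫ ω, Y j i ω ∂P = p j := by
    intro j i
    have h1 : ∫ ω, Y j i ω ∂P = ∫ x, g j x ∂(P.map (X i)) := by
      rw [integral_map (hmeas i).aemeasurable (hgmeas j).aestronglyMeasurable]
    rw [h1, hid i, hgdef, hpdef]
    exact integral_indicator_one (hSmeas j)
  have hp_nonneg : ∀ j, 0 ≤ p j := fun j => ENNReal.toReal_nonneg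
  have hYsq : ∀ j i ω, (Y j i ω) ^ 2 = Y j i ω := by
    intro j i ω
    by_cases h : X i ω ∈ Sj j <;> simp [hYdef, hgdef, h]
  have hYvar : ∀ j i, variance (Y j i) P ≤ p j := by
    intro j i
    rw [variance_eq_sub (hYL2 j i)]
    have h2 : (∫ ω, (Y j i ω) ^ 2 ∂P) = p j := by
      rw [integral_congr_ae (ae_of_all _ fun ω => hYsq j i ω), hYint j i]
    calc P[Y j i ^ 2] - P[Y j i] ^ 2 ≤ P[Y j i ^ 2] := by
          simp only [sub_le_self_iff]; positivity
      _ = p j := h2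
  -- the averaged sums
  set f : Fin m → Ω → ℝ := fun j ω => (N:ℝ)⁻¹ * ∑ i : Fin N, Y j i ω with hfdef
  have hsum_eq : ∀ j, (∑ i : Fin N, Y j i) = fun ω => ∑ i : Fin N, Y j i ω := by
    intro j; funext ω; simp [Finset.sum_apply]
  have hfL2 : ∀ j, MemLp (f j) 2 P := by
    intro j
    have h := (memLp_finset_sum' (μ := P) Finset.univ fun i _ => hYL2 j i).const_mul (N:ℝ)⁻¹
    rw [hsum_eq j] at h
    exact h
  have hfmean : ∀ j, ∫ ω, f j ω ∂P = p j := by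
    intro j
    rw [hfdef]
    rw [integral_const_mul, integral_finset_sum _ fun i _ => (hYL2 j i).integrable one_le_two]
    simp only [hYint]
    rw [Finset.sum_const, Finset.card_univ, Fintype.card_fin, nsmul_eq_mul]
    field_simp
  have hfvar : ∀ j, variance (f j) P ≤ p j / N := by
    intro j
    have hvm : variance (f j) P = ((N:ℝ)⁻¹) ^ 2 * variance (fun ω => ∑ i : Fin N, Y j i ω) P :=
      variance_const_mul _ _ _
    have hindY : Set.Pairwise ↑(Finset.univ : Finset (Fin N))
        fun i k => IndepFun (Y j i) (Y j k) P := by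
      intro i _ k _ hik
      exact (hindep.indepFun hik).comp (hgmeas j) (hgmeas j)
    have hvs : variance (∑ i : Fin N, Y j i) P = ∑ i : Fin N, variance (Y j i) P :=
      IndepFun.variance_sum (fun i _ => hYL2 j i) hindY
    rw [hsum_eq j] at hvs
    have hsumle : ∑ i : Fin N, variance (Y j i) P ≤ N * p j := by
      calc ∑ i : Fin N, variance (Y j i) P ≤ ∑ _i : Fin N, p j :=
            Finset.sum_le_sum fun i _ => hYvar j i
        _ = N * p j := by simp [Finset.sum_const, nsmul_eq_mul]
    rw [hvm, hvs]
    have hNpos : (0:ℝ) < N := by exact_mod_cast hN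
    calc ((N:ℝ)⁻¹) ^ 2 * ∑ i : Fin N, variance (Y j i) P
        ≤ ((N:ℝ)⁻¹) ^ 2 * (N * p j) := by
          apply mul_le_mul_of_nonneg_left hsumle (by positivity)
      _ = p j / N := by field_simp
  have hj : ∀ j, ∫ ω, |f j ω - p j| ∂P ≤ Real.sqrt (p j / N) := by
    intro j
    have h := aux_integral_abs_sub_le_sqrt_variance P (hfL2 j)
    rw [hfmean j] at h
    exact h.trans (Real.sqrt_le_sqrt (hfvar j))
  -- rewrite empirical measure
  have hEmp : ∀ ω j, (empMeas X ω (Sj j)).toReal = f j ω := by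
    intro ω j
    rw [aux_empMeas_toReal X ω (hSmeas j)]
  have hint : ∀ j, Integrable (fun ω => |f j ω - p j|) P :=
    fun j => (((hfL2 j).integrable one_le_two).sub (integrable_const _)).abs
  have hLHS : (∫ ω, ∑ j : Fin m, |(empMeas X ω (Sj j)).toReal - (μ (Sj j)).toReal| ∂P)
      = ∑ j : Fin m, ∫ ω, |f j ω - p j| ∂P := by
    rw [← integral_finset_sum _ fun j _ => hint j]
    refine integral_congr_ae (ae_of_all _ fun ω => ?_)
    exact Finset.sum_congr rfl fun j _ => by rw [hEmp ω j]
  rw [hLHS]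
  -- Cauchy–Schwarz over the finite sum
  have hsumT : ∑ j : Fin m, p j = (μ T).toReal := by
    rw [hT, measure_iUnion hdisj hSmeas, tsum_fintype,
      ENNReal.toReal_sum (fun j _ => measure_ne_top _ _)]
  have hstep : ∑ j : Fin m, Real.sqrt (p j / N) ≤ Real.sqrt (m * (μ T).toReal / N) := by
    have hnn : 0 ≤ ∑ j : Fin m, Real.sqrt (p j / N) :=
      Finset.sum_nonneg fun j _ => Real.sqrt_nonneg _
    rw [← Real.sqrt_sq hnn]
    apply Real.sqrt_le_sqrt
    calc (∑ j : Fin m, Real.sqrt (p j / N)) ^ 2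
        ≤ (Finset.univ : Finset (Fin m)).card * ∑ j : Fin m, Real.sqrt (p j / N) ^ 2 :=
          sq_sum_le_card_mul_sum_sq
      _ = m * (μ T).toReal / N := by
          have : ∀ j : Fin m, Real.sqrt (p j / N) ^ 2 = p j / N := by
            intro j
            exact Real.sq_sqrt (by positivity)
          simp only [this, Finset.card_univ, Fintype.card_fin]
          rw [← Finset.sum_div, hsumT]
          ring
  exact le_trans (Finset.sum_le_sum fun j _ => hj j) hstep

end
end

section
/- Let Σ ∈ Sym₊(n) be a positive semidefinite symmetric matrix, and let Π be the orthogonal projector onto the span of eigenvectors corresponding to the d largest eigenvalues of Σ (for some choice of orthonormal eigenbasis). Then for every rank-d orthogonal projector Π̃ ∈ P_{d,n}, ‖Σ − Π‖ ≤ ‖Σ − Π̃‖ in operator norm. -/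
open MeasureTheory Metric Set

noncomputable section

/-- The rank-one operator `z ⊗ z : x ↦ ⟪z, x⟫ z` on `ℝⁿ`. -/
def rankOne {n : ℕ} (z : EuclideanSpace ℝ (Fin n)) :
    EuclideanSpace ℝ (Fin n) →L[ℝ] EuclideanSpace ℝ (Fin n) :=
  (innerSL ℝ z).smulRight z

namespace Stmt16Aux

open Module Submodule

variable {n : ℕ}

lemma rankOne_apply (z x : EuclideanSpace ℝ (Fin n)) :
    rankOne z x = (inner ℝ z x : ℝ) • z := rfl

lemma inner_T_le (T : EuclideanSpace ℝ (Fin n) →L[ℝ] EuclideanSpace ℝ (Fin n))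
    {x : EuclideanSpace ℝ (Fin n)} (hx : ‖x‖ = 1) : |(inner ℝ x (T x) : ℝ)| ≤ ‖T‖ := by
  calc |(inner ℝ x (T x) : ℝ)| ≤ ‖x‖ * ‖T x‖ := abs_real_inner_le_norm _ _
    _ ≤ ‖x‖ * (‖T‖ * ‖x‖) := by gcongr; exact T.le_opNorm x
    _ = ‖T‖ := by rw [hx]; ring

lemma finrank_span {ι : Type*} [Fintype ι] {v : ι → EuclideanSpace ℝ (Fin n)}
    (hv : Orthonormal ℝ v) (S : Finset ι) :
    finrank ℝ (span ℝ (v '' ↑S)) = S.card := by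
  have li : LinearIndependent ℝ (fun i : ↥(↑S : Set ι) => v i) :=
    hv.linearIndependent.comp _ Subtype.val_injective
  rw [Set.image_eq_range, finrank_span_eq_card li]
  simp

lemma exists_unit {s t : Submodule ℝ (EuclideanSpace ℝ (Fin n))}
    (h : n < finrank ℝ s + finrank ℝ t) :
    ∃ x : EuclideanSpace ℝ (Fin n), ‖x‖ = 1 ∧ x ∈ s ∧ x ∈ t := by
  have h1 := Submodule.finrank_sup_add_finrank_inf_eq s t
  have h2 : finrank ℝ ↥(s ⊔ t) ≤ n := (Submodule.finrank_le _).trans_eq finrank_euclideanSpace_fin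
  have h3 : 0 < finrank ℝ ↥(s ⊓ t) := by omega
  have : Nontrivial ↥(s ⊓ t) := finrank_pos_iff.mp h3
  obtain ⟨x, hx0⟩ := exists_ne (0 : ↥(s ⊓ t))
  have hxne : (x : EuclideanSpace ℝ (Fin n)) ≠ 0 := fun h => hx0 (Subtype.ext h)
  have hmem := x.2
  refine ⟨‖(x : EuclideanSpace ℝ (Fin n))‖⁻¹ • x, ?_, ?_, ?_⟩
  · rw [norm_smul, norm_inv, norm_norm, inv_mul_cancel₀ (norm_ne_zero_iff.mpr hxne)]
  · exact s.smul_mem _ (mem_inf.mp hmem).1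
  · exact t.smul_mem _ (mem_inf.mp hmem).2

lemma inner_eq_zero {ι : Type*} {v : ι → EuclideanSpace ℝ (Fin n)}
    (hv : Orthonormal ℝ v) {S : Finset ι} {k : ι} (hk : k ∉ S)
    {x : EuclideanSpace ℝ (Fin n)} (hx : x ∈ span ℝ (v '' ↑S)) :
    (inner ℝ (v k) x : ℝ) = 0 := by
  have hle : span ℝ (v '' ↑S) ≤ LinearMap.ker (innerSL ℝ (v k) : _ →ₗ[ℝ] ℝ) := by
    rw [span_le]
    rintro y ⟨j, hj, rfl⟩
    simp only [SetLike.mem_coe, LinearMap.mem_ker, ContinuousLinearMap.coe_coe, innerSL_apply_apply]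
    exact hv.2 (fun h => hk (h ▸ hj))
  simpa using hle hx

lemma basis_of {u : Fin n → EuclideanSpace ℝ (Fin n)} (hu : Orthonormal ℝ u) (hn : n ≠ 0) :
    ∃ b : OrthonormalBasis (Fin n) ℝ (EuclideanSpace ℝ (Fin n)), ⇑b = u := by
  have : Nonempty (Fin n) := ⟨⟨0, Nat.pos_of_ne_zero hn⟩⟩
  have card_eq : Fintype.card (Fin n) = finrank ℝ (EuclideanSpace ℝ (Fin n)) := by
    simp [finrank_euclideanSpace_fin]
  have hb : ⇑(basisOfOrthonormalOfCardEqFinrank hu card_eq) = u :=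
    coe_basisOfOrthonormalOfCardEqFinrank hu card_eq
  refine ⟨(basisOfOrthonormalOfCardEqFinrank hu card_eq).toOrthonormalBasis (by rwa [hb]), ?_⟩
  rw [Basis.coe_toOrthonormalBasis, hb]

lemma parseval {u : Fin n → EuclideanSpace ℝ (Fin n)} (hu : Orthonormal ℝ u)
    (x : EuclideanSpace ℝ (Fin n)) : ∑ k, (inner ℝ (u k) x : ℝ) ^ 2 = ‖x‖ ^ 2 := by
  rcases Nat.eq_zero_or_pos n with hn | hn
  · subst hn
    have : x = 0 := Subsingleton.elim x 0
    simp [this]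
  · obtain ⟨b, hb⟩ := basis_of hu hn.ne'
    have := b.sum_inner_mul_inner x x
    rw [← real_inner_self_eq_norm_sq, ← this]
    refine Finset.sum_congr rfl fun k _ => ?_
    rw [hb, real_inner_comm x (u k), sq]

/-- Quadratic form of a weighted sum of rank-one operators. -/
lemma inner_sum_rankOne {ι : Type*} [Fintype ι] (w : ι → ℝ) (v : ι → EuclideanSpace ℝ (Fin n))
    (x : EuclideanSpace ℝ (Fin n)) :
    (inner ℝ x ((∑ i, w i • rankOne (v i)) x) : ℝ) = ∑ i, w i * (inner ℝ (v i) x : ℝ) ^ 2 := by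
  rw [ContinuousLinearMap.sum_apply, inner_sum]
  refine Finset.sum_congr rfl fun i _ => ?_
  rw [ContinuousLinearMap.smul_apply, rankOne_apply, real_inner_smul_right,
    real_inner_smul_right, real_inner_comm x (v i)]
  ring

lemma sum_rankOne_eq {ι : Type*} [Fintype ι] (w : ι → ℝ) (v : ι → EuclideanSpace ℝ (Fin n))
    (x : EuclideanSpace ℝ (Fin n)) :
    (∑ i, w i • rankOne (v i)) x = ∑ i, (w i * (inner ℝ (v i) x : ℝ)) • v i := by
  rw [ContinuousLinearMap.sum_apply]
  refine Finset.sum_congr rfl fun i _ => ?_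
  rw [ContinuousLinearMap.smul_apply, rankOne_apply, smul_smul]

/-- A sum of rank-one projectors onto an orthonormal family fixes vectors in the span. -/
lemma fixes_span {ι : Type*} [Fintype ι] [DecidableEq ι] {v : ι → EuclideanSpace ℝ (Fin n)}
    (hv : Orthonormal ℝ v) {x : EuclideanSpace ℝ (Fin n)}
    (hx : x ∈ span ℝ (Set.range v)) :
    (∑ i, rankOne (v i)) x = x := by
  induction hx using span_induction with
  | mem y hy =>
    obtain ⟨j, rfl⟩ := hy
    rw [show (∑ i, rankOne (v i)) = ∑ i, (1:ℝ) • rankOne (v i) by simp]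
    rw [sum_rankOne_eq]
    have : ∀ i, ((1:ℝ) * (inner ℝ (v i) (v j) : ℝ)) = if i = j then (1:ℝ) else 0 := by
      intro i
      rw [one_mul, orthonormal_iff_ite.mp hv]
    simp_rw [this, ite_smul, zero_smul]
    simp
  | zero => simp
  | add y z _ _ hy hz => rw [map_add, hy, hz]
  | smul c y _ hy => rw [_root_.map_smul, hy]

lemma kills_orth {ι : Type*} [Fintype ι] {v : ι → EuclideanSpace ℝ (Fin n)}
    {x : EuclideanSpace ℝ (Fin n)}
    (hx : x ∈ (span ℝ (Set.range v))ᗮ) :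
    (∑ i, rankOne (v i)) x = 0 := by
  rw [show (∑ i, rankOne (v i)) = ∑ i, (1:ℝ) • rankOne (v i) by simp, sum_rankOne_eq]
  refine Finset.sum_eq_zero fun i _ => ?_
  have : (inner ℝ (v i) x : ℝ) = 0 :=
    (Submodule.mem_orthogonal _ _).mp hx _ (subset_span ⟨i, rfl⟩)
  rw [this, mul_zero, zero_smul]

end Stmt16Aux

/-- Let `Σ = ∑ₖ λₖ uₖ ⊗ uₖ` be positive semidefinite symmetric (with `u` an orthonormal
eigenbasis and `λ` nonincreasing, nonnegative), and let `Π = ∑_{k<d} uₖ ⊗ uₖ` be the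
projector onto the span of the eigenvectors of the `d` largest eigenvalues. Then for every
rank-`d` orthogonal projector `Π̃`, `‖Σ − Π‖ ≤ ‖Σ − Π̃‖` in operator norm. -/
theorem stmt_16 {n d : ℕ} (hdn : d ≤ n)
    (u : Fin n → EuclideanSpace ℝ (Fin n)) (hu : Orthonormal ℝ u)
    (lam : Fin n → ℝ) (hmono : Antitone lam) (hnn : ∀ k, 0 ≤ lam k)
    (Sig : EuclideanSpace ℝ (Fin n) →L[ℝ] EuclideanSpace ℝ (Fin n))
    (hSig : Sig = ∑ k : Fin n, lam k • rankOne (u k))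
    (Pi : EuclideanSpace ℝ (Fin n) →L[ℝ] EuclideanSpace ℝ (Fin n))
    (hPi : Pi = ∑ k ∈ Finset.univ.filter (fun k : Fin n => (k : ℕ) < d), rankOne (u k))
    (Pit : EuclideanSpace ℝ (Fin n) →L[ℝ] EuclideanSpace ℝ (Fin n))
    (hPit : ∃ v : Fin d → EuclideanSpace ℝ (Fin n),
      Orthonormal ℝ v ∧ Pit = ∑ i : Fin d, rankOne (v i)) :
    ‖Sig - Pi‖ ≤ ‖Sig - Pit‖ := by
  classical
  open Module Submodule Stmt16Aux in
  obtain ⟨v, hv, hPitv⟩ := hPit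
  rcases Nat.eq_zero_or_pos n with hn0 | hn0
  · subst hn0
    rw [hSig, hPi]
    simp only [Finset.univ_eq_empty, Finset.filter_empty, Finset.sum_empty, sub_zero, sub_self,
      norm_zero]
    positivity
  set ε : Fin n → ℝ := fun k => if (k : ℕ) < d then 1 else 0 with hε
  set M := ‖Sig - Pit‖ with hMdef
  -- quadratic forms
  have hSigQ : ∀ x : EuclideanSpace ℝ (Fin n),
      (inner ℝ x (Sig x) : ℝ) = ∑ j, lam j * (inner ℝ (u j) x : ℝ) ^ 2 := fun x => by
    rw [hSig]; exact inner_sum_rankOne lam u x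
  have hPitQ : ∀ x : EuclideanSpace ℝ (Fin n),
      (inner ℝ x (Pit x) : ℝ) = ∑ i, (inner ℝ (v i) x : ℝ) ^ 2 := fun x => by
    rw [hPitv, show (∑ i, rankOne (v i)) = ∑ i, (1 : ℝ) • rankOne (v i) by simp]
    rw [inner_sum_rankOne]
    simp
  have hTQ : ∀ x : EuclideanSpace ℝ (Fin n),
      (inner ℝ x ((Sig - Pit) x) : ℝ) = (inner ℝ x (Sig x) : ℝ) - (inner ℝ x (Pit x) : ℝ) := fun x => by
    rw [ContinuousLinearMap.sub_apply, inner_sub_right]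
  have hspanv : (span ℝ (v '' ↑(Finset.univ : Finset (Fin d)))) = span ℝ (Set.range v) := by
    rw [Finset.coe_univ, Set.image_univ]
  have hfrv : finrank ℝ (span ℝ (v '' ↑(Finset.univ : Finset (Fin d)))) = d := by
    rw [finrank_span hv]; simp
  -- Step A : each eigenvalue gap is at most M
  have key : ∀ k : Fin n, |lam k - ε k| ≤ M := by
    intro k
    by_cases hkd : (k : ℕ) < d
    · -- two bounds
      have h1 : lam k - 1 ≤ M := by
        have hy1 : ‖u k‖ = 1 := hu.1 k
        have hSigy : (inner ℝ (u k) (Sig (u k)) : ℝ) = lam k := by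
          rw [hSigQ]
          have h : ∀ j, lam j * (inner ℝ (u j) (u k) : ℝ) ^ 2 = if j = k then lam j else 0 := by
            intro j
            rw [orthonormal_iff_ite.mp hu]
            split_ifs <;> simp
          simp_rw [h]
          simp
        have hBessel : (inner ℝ (u k) (Pit (u k)) : ℝ) ≤ 1 := by
          rw [hPitQ]
          have hb := hv.sum_inner_products_le (u k) (s := Finset.univ)
          simpa [hy1, Real.norm_eq_abs, sq_abs] using hb
        have hlow : lam k - 1 ≤ (inner ℝ (u k) ((Sig - Pit) (u k)) : ℝ) := by
          rw [hTQ, hSigy]; linarith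
        exact hlow.trans ((le_abs_self _).trans (inner_T_le _ hy1))
      have h2 : 1 - lam k ≤ M := by
        set s := span ℝ (u '' ↑(Finset.Ici k)) with hs
        set t := span ℝ (v '' ↑(Finset.univ : Finset (Fin d))) with ht
        have hfs : finrank ℝ s = n - (k : ℕ) := by
          rw [hs, finrank_span hu, Fin.card_Ici]
        have hdim : n < finrank ℝ s + finrank ℝ t := by
          rw [hfs, hfrv]
          have := k.isLt
          omega
        obtain ⟨y, hy1, hys, hyt⟩ := exists_unit hdim
        have hfix : Pit y = y := by
          rw [hPitv]
          exact fixes_span hv (hspanv ▸ hyt)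
        have hyy : (inner ℝ y y : ℝ) = 1 := by
          rw [real_inner_self_eq_norm_sq, hy1, one_pow]
        have hSigy : (inner ℝ y (Sig y) : ℝ) ≤ lam k := by
          rw [hSigQ]
          have hsum : ∑ j, lam j * (inner ℝ (u j) y : ℝ) ^ 2
              ≤ ∑ j, lam k * (inner ℝ (u j) y : ℝ) ^ 2 := by
            refine Finset.sum_le_sum fun j _ => ?_
            by_cases hj : j ∈ Finset.Ici k
            · exact mul_le_mul_of_nonneg_right (hmono (Finset.mem_Ici.mp hj)) (sq_nonneg _)
            · rw [inner_eq_zero hu hj hys]; simp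
          calc ∑ j, lam j * (inner ℝ (u j) y : ℝ) ^ 2
              ≤ ∑ j, lam k * (inner ℝ (u j) y : ℝ) ^ 2 := hsum
            _ = lam k * ∑ j, (inner ℝ (u j) y : ℝ) ^ 2 := by rw [Finset.mul_sum]
            _ = lam k := by rw [parseval hu, hy1]; ring
        have habs := inner_T_le (Sig - Pit) hy1
        have hub : (inner ℝ y ((Sig - Pit) y) : ℝ) ≤ lam k - 1 := by
          rw [hTQ]
          have : (inner ℝ y (Pit y) : ℝ) = 1 := by rw [hfix, hyy]
          rw [this]; linarith
        have := abs_le.mp habs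
        linarith [this.1]
      have : ε k = 1 := by simp [hε, hkd]
      rw [this, abs_le]
      constructor <;> linarith
    · -- k ≥ d : show lam k ≤ M
      have hεk : ε k = 0 := by simp [hε, hkd]
      rw [hεk, sub_zero, abs_of_nonneg (hnn k)]
      set s := span ℝ (u '' ↑(Finset.Iic k)) with hs
      set t := (span ℝ (v '' ↑(Finset.univ : Finset (Fin d))))ᗮ with ht
      have hfs : finrank ℝ s = (k : ℕ) + 1 := by
        rw [hs, finrank_span hu, Fin.card_Iic]
      have hft : finrank ℝ t = n - d := by
        have horth := Submodule.finrank_add_finrank_orthogonal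
          (span ℝ (v '' ↑(Finset.univ : Finset (Fin d))))
        rw [hfrv, finrank_euclideanSpace_fin, ← ht] at horth
        omega
      have hdim : n < finrank ℝ s + finrank ℝ t := by
        rw [hfs, hft]
        omega
      obtain ⟨y, hy1, hys, hyt⟩ := exists_unit hdim
      have hkill : Pit y = 0 := by
        rw [hPitv]
        exact kills_orth (hspanv ▸ hyt)
      have hSigy : lam k ≤ (inner ℝ y (Sig y) : ℝ) := by
        rw [hSigQ]
        have hsum : ∑ j, lam k * (inner ℝ (u j) y : ℝ) ^ 2
            ≤ ∑ j, lam j * (inner ℝ (u j) y : ℝ) ^ 2 := by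
          refine Finset.sum_le_sum fun j _ => ?_
          by_cases hj : j ∈ Finset.Iic k
          · exact mul_le_mul_of_nonneg_right (hmono (Finset.mem_Iic.mp hj)) (sq_nonneg _)
          · rw [inner_eq_zero hu hj hys]; simp
        calc lam k = lam k * ∑ j, (inner ℝ (u j) y : ℝ) ^ 2 := by
              rw [parseval hu, hy1]; ring
          _ = ∑ j, lam k * (inner ℝ (u j) y : ℝ) ^ 2 := by rw [Finset.mul_sum]
          _ ≤ _ := hsum
      have hlow : lam k ≤ (inner ℝ y ((Sig - Pit) y) : ℝ) := by
        rw [hTQ]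
        have : (inner ℝ y (Pit y) : ℝ) = 0 := by rw [hkill, inner_zero_right]
        rw [this]; linarith
      exact hlow.trans ((le_abs_self _).trans (inner_T_le _ hy1))
  -- Step B : operator norm bound
  refine ContinuousLinearMap.opNorm_le_bound _ (norm_nonneg _) fun x => ?_
  have hdecomp : (Sig - Pi) x = ∑ k, ((lam k - ε k) * (inner ℝ (u k) x : ℝ)) • u k := by
    rw [ContinuousLinearMap.sub_apply, hSig, sum_rankOne_eq lam u x, hPi,
      ContinuousLinearMap.sum_apply]
    simp_rw [rankOne_apply]
    rw [Finset.sum_filter, ← Finset.sum_sub_distrib]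
    refine Finset.sum_congr rfl fun k _ => ?_
    rw [sub_mul, sub_smul]
    by_cases hk : (k : ℕ) < d <;> simp [hε, hk]
  have hnorm2 : ‖(Sig - Pi) x‖ ^ 2 = ∑ k, ((lam k - ε k) * (inner ℝ (u k) x : ℝ)) ^ 2 := by
    rw [hdecomp, ← real_inner_self_eq_norm_sq, hu.inner_sum]
    exact Finset.sum_congr rfl fun k _ => by simp [sq]
  have hb : ‖(Sig - Pi) x‖ ^ 2 ≤ (M * ‖x‖) ^ 2 := by
    rw [hnorm2]
    calc ∑ k, ((lam k - ε k) * (inner ℝ (u k) x : ℝ)) ^ 2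
        ≤ ∑ k, M ^ 2 * (inner ℝ (u k) x : ℝ) ^ 2 := by
          refine Finset.sum_le_sum fun k _ => ?_
          rw [mul_pow]
          have h1 : (lam k - ε k) ^ 2 ≤ M ^ 2 := by
            rw [← sq_abs]
            exact pow_le_pow_left₀ (abs_nonneg _) (key k) 2
          exact mul_le_mul_of_nonneg_right h1 (sq_nonneg _)
      _ = M ^ 2 * ‖x‖ ^ 2 := by rw [← Finset.mul_sum, parseval hu]
      _ = (M * ‖x‖) ^ 2 := by ring
  have hM0 : 0 ≤ M * ‖x‖ := mul_nonneg (norm_nonneg _) (norm_nonneg _)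
  nlinarith [norm_nonneg ((Sig - Pi) x)]


end
end

section
/- Let S, S_{sg,l} ⊂ ℝⁿ be sets such that ℋ^d|_S is d-Ahlfors regular with constant C̃₀ and ℋ^l|_{S_{sg,l}} is l-Ahlfors regular with constant C on scales up to R (for some 0 ≤ l < d and R ∈ (0,1)). Then for every Borel set D ⊂ ℝⁿ and every 0 < ρ ≤ R, ℋ^d(S_{sg,l}^ρ ∩ D ∩ S) ≤ M ρ^{d−l} ℋ^l(S_{sg,l} ∩ D^{2ρ}), where M depends only on d, C̃₀, C, and A^ρ denotes the open ρ-neighbourhood of A. -/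
open MeasureTheory Metric Set
open scoped ENNReal

noncomputable section

/-- Counting lemma: a set of finite positive diameter `t` whose `d`-dimensional Hausdorff
measure is upper Ahlfors regular at scales up to the diameter has
`μH[d] S ≤ 16 ^ n * (Ct₀ * t ^ d)`. -/
private lemma aux_count_19 {n d : ℕ} (Ct₀ : ℝ) {t : ℝ} (ht : 0 < t)
    {S : Set (EuclideanSpace ℝ (Fin n))} (hdiam : EMetric.diam S = ENNReal.ofReal t)
    {x₀ : EuclideanSpace ℝ (Fin n)} (hx₀ : x₀ ∈ S)
    (hupper : ∀ x ∈ S, ∀ r : ℝ, 0 < r → ENNReal.ofReal r ≤ EMetric.diam S →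
      μH[(d : ℝ)] (S ∩ ball x r) ≤ ENNReal.ofReal (Ct₀ * r ^ d)) :
    μH[(d : ℝ)] S ≤ (16 : ℝ≥0∞) ^ n * ENNReal.ofReal (Ct₀ * t ^ d) := by
  obtain ⟨u, huS, hdisj, hcov⟩ :=
    Vitali.exists_disjoint_subfamily_covering_enlargement_closedBall S (fun a => a)
      (fun _ => t / 8) (t / 8) (fun a _ => le_rfl) 4 (by norm_num)
  have hucnt : u.Countable := by
    refine hdisj.countable_of_nonempty_interior fun b _ => ?_
    exact ⟨b, ball_subset_interior_closedBall (mem_ball_self (by positivity))⟩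
  have hScov : S ⊆ ⋃ b ∈ u, (S ∩ ball b t) := by
    intro a ha
    obtain ⟨b, hb, hsub⟩ := hcov a ha
    have hab : a ∈ closedBall b (4 * (t / 8)) := hsub (mem_closedBall_self (by positivity))
    refine mem_biUnion hb ⟨ha, ?_⟩
    have : dist a b ≤ 4 * (t / 8) := hab
    exact lt_of_le_of_lt this (by linarith)
  -- counting via Lebesgue volume
  set V := volume (closedBall (0 : EuclideanSpace ℝ (Fin n)) 1) with hV
  set c : ℝ≥0∞ := ENNReal.ofReal ((t / 8) ^ n) * V with hc
  have hvol : ∀ b : EuclideanSpace ℝ (Fin n), volume (closedBall b (t / 8)) = c := by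
    intro b
    rw [hc, hV, Measure.addHaar_closedBall' volume b (by positivity : (0:ℝ) ≤ t / 8),
      finrank_euclideanSpace_fin]
  have hsubball : ∀ b ∈ u, closedBall b (t / 8) ⊆ closedBall x₀ (2 * t) := by
    intro b hb
    apply closedBall_subset_closedBall'
    have hdb : dist b x₀ ≤ t := by
      rw [← edist_le_ofReal ht.le, ← hdiam]
      exact EMetric.edist_le_diam_of_mem (huS hb) hx₀
    linarith
  have hc0 : c ≠ 0 := by
    rw [hc]
    refine mul_ne_zero ?_ (measure_closedBall_pos volume _ one_pos).ne'
    simp only [ne_eq, ENNReal.ofReal_eq_zero, not_le]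
    positivity
  have hctop : c ≠ ⊤ := by
    rw [hc]
    exact ENNReal.mul_ne_top ENNReal.ofReal_ne_top measure_closedBall_lt_top.ne
  have hunion : volume (⋃ b ∈ u, closedBall b (t / 8)) = ∑' b : u, volume (closedBall (b : EuclideanSpace ℝ (Fin n)) (t / 8)) :=
    measure_biUnion hucnt hdisj fun b _ => measurableSet_closedBall
  have hsum_le : (∑' _ : u, (1 : ℝ≥0∞)) * c ≤ (16 : ℝ≥0∞) ^ n * c := by
    have h1 : (∑' _ : u, (1 : ℝ≥0∞)) * c = ∑' b : u, volume (closedBall (b : EuclideanSpace ℝ (Fin n)) (t / 8)) := by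
      rw [← ENNReal.tsum_mul_right]
      simp only [one_mul]
      exact tsum_congr fun b => (hvol b).symm
    have h2 : volume (closedBall x₀ (2 * t)) = (16 : ℝ≥0∞) ^ n * c := by
      rw [Measure.addHaar_closedBall' volume x₀ (by positivity : (0:ℝ) ≤ 2 * t),
        finrank_euclideanSpace_fin, hc, hV, ← mul_assoc]
      congr 1
      rw [show ((16 : ℝ≥0∞)) ^ n = ENNReal.ofReal ((16 : ℝ) ^ n) by
          rw [ENNReal.ofReal_pow (by norm_num : (0:ℝ) ≤ 16)]; norm_num,
        ← ENNReal.ofReal_mul (by positivity), ← mul_pow]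
      congr 1
      ring
    rw [h1, ← h2, ← hunion]
    exact measure_mono (iUnion₂_subset hsubball)
  have hcard : (∑' _ : u, (1 : ℝ≥0∞)) ≤ (16 : ℝ≥0∞) ^ n :=
    (ENNReal.mul_le_mul_iff_left hc0 hctop).1 hsum_le
  calc μH[(d : ℝ)] S ≤ μH[(d : ℝ)] (⋃ b ∈ u, (S ∩ ball b t)) := measure_mono hScov
    _ ≤ ∑' b : u, μH[(d : ℝ)] (S ∩ ball (b : EuclideanSpace ℝ (Fin n)) t) :=
        measure_biUnion_le _ hucnt _
    _ ≤ ∑' _ : u, ENNReal.ofReal (Ct₀ * t ^ d) := by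
        refine ENNReal.tsum_le_tsum fun b => ?_
        exact hupper (b : EuclideanSpace ℝ (Fin n)) (huS b.2) t ht (by rw [hdiam])
    _ = (∑' _ : u, (1 : ℝ≥0∞)) * ENNReal.ofReal (Ct₀ * t ^ d) := by
        rw [← ENNReal.tsum_mul_right]; simp
    _ ≤ (16 : ℝ≥0∞) ^ n * ENNReal.ofReal (Ct₀ * t ^ d) := by gcongr

/-- If `ℋ^d|_S` is `d`-Ahlfors regular with constant `C̃₀` and `ℋ^l|_{S_{sg}}` is
`l`-Ahlfors regular with constant `C` on scales up to `R` (with `l < d`), then there is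
`M = M(d, C̃₀, C) > 0` such that for every Borel `D` and `0 < ρ ≤ R`,
`ℋ^d(S_{sg}^ρ ∩ D ∩ S) ≤ M ρ^{d−l} ℋ^l(S_{sg} ∩ D^{2ρ})`. -/
theorem stmt_19 {n d l : ℕ} (hl : l < d) (hdn : d ≤ n)
    (Ct₀ C : ℝ) (hCt₀ : 1 ≤ Ct₀) (hC : 1 ≤ C) :
    ∃ M : ℝ, 0 < M ∧
      ∀ (S Ssg : Set (EuclideanSpace ℝ (Fin n))) (R : ℝ), 0 < R → R < 1 →
      (∀ x ∈ S, ∀ r : ℝ, 0 < r → ENNReal.ofReal r ≤ EMetric.diam S →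
        ENNReal.ofReal (Ct₀⁻¹ * r ^ d) ≤ μH[(d : ℝ)] (S ∩ ball x r) ∧
          μH[(d : ℝ)] (S ∩ ball x r) ≤ ENNReal.ofReal (Ct₀ * r ^ d)) →
      (∀ x ∈ Ssg, ∀ r : ℝ, 0 < r → r ≤ R →
        ENNReal.ofReal (C⁻¹ * r ^ l) ≤ μH[(l : ℝ)] (Ssg ∩ ball x r) ∧
          μH[(l : ℝ)] (Ssg ∩ ball x r) ≤ ENNReal.ofReal (C * r ^ l)) →
      ∀ (D : Set (EuclideanSpace ℝ (Fin n))), MeasurableSet D →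
      ∀ ρ : ℝ, 0 < ρ → ρ ≤ R →
        μH[(d : ℝ)] (thickening ρ Ssg ∩ D ∩ S) ≤
          ENNReal.ofReal (M * ρ ^ (d - l)) * μH[(l : ℝ)] (Ssg ∩ thickening (2 * ρ) D) := by
  classical
  have hd1 : 0 < d := lt_of_le_of_lt (Nat.zero_le l) hl
  have hC0 : (0 : ℝ) < C := lt_of_lt_of_le one_pos hC
  have hCt0 : (0 : ℝ) < Ct₀ := lt_of_lt_of_le one_pos hCt₀
  have h16 : (1 : ℝ) ≤ 16 ^ n := one_le_pow₀ (by norm_num)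
  refine ⟨16 ^ n * (Ct₀ * (6 ^ d * C)), by positivity, ?_⟩
  intro S Ssg R hR hR1 hreg hregl D hD ρ hρ hρR
  set M : ℝ := 16 ^ n * (Ct₀ * (6 ^ d * C)) with hM
  set T := thickening ρ Ssg ∩ D ∩ S with hTdef
  rcases T.eq_empty_or_nonempty with hTe | ⟨x₀, hx₀⟩
  · rw [hTe, measure_empty]; exact zero_le
  obtain ⟨⟨hx₀thick, hx₀D⟩, hx₀S⟩ := hx₀
  obtain ⟨y₀, hy₀Ssg, hy₀d⟩ := mem_thickening_iff.1 hx₀thick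
  -- the key scalar identity
  have hpow : ρ ^ (d - l) * ρ ^ l = ρ ^ d := by
    rw [← pow_add, Nat.sub_add_cancel hl.le]
  have hscal : (M * ρ ^ (d - l)) * (C⁻¹ * ρ ^ l) = 16 ^ n * Ct₀ * (6 * ρ) ^ d := by
    calc (M * ρ ^ (d - l)) * (C⁻¹ * ρ ^ l)
        = 16 ^ n * Ct₀ * 6 ^ d * (C * C⁻¹) * (ρ ^ (d - l) * ρ ^ l) := by rw [hM]; ring
      _ = 16 ^ n * Ct₀ * 6 ^ d * ρ ^ d := by
          rw [mul_inv_cancel₀ hC0.ne', hpow, mul_one]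
      _ = 16 ^ n * Ct₀ * (6 * ρ) ^ d := by rw [mul_pow]; ring
  -- if a point of Ssg is within ρ of a point of D, the ball around it lies in the 2ρ-thickening
  have hF1 : ∀ b ∈ Ssg, ∀ x ∈ D, dist x b < ρ →
      Ssg ∩ ball b ρ ⊆ Ssg ∩ thickening (2 * ρ) D := by
    intro b _ x hxD hxb z hz
    refine ⟨hz.1, mem_thickening_iff.2 ⟨x, hxD, ?_⟩⟩
    have h1 : dist z b < ρ := hz.2
    calc dist z x ≤ dist z b + dist b x := dist_triangle z b x
      _ < ρ + ρ := by rw [dist_comm b x]; exact add_lt_add h1 hxb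
      _ = 2 * ρ := by ring
  -- lower regularity bound at scale ρ
  have hF2 : ∀ b ∈ Ssg, ENNReal.ofReal (C⁻¹ * ρ ^ l) ≤ μH[(l : ℝ)] (Ssg ∩ ball b ρ) :=
    fun b hb => (hregl b hb ρ hρ hρR).1
  by_cases hbig : ENNReal.ofReal (6 * ρ) ≤ EMetric.diam S
  · -- main case : Vitali covering argument
    set Y : Set (EuclideanSpace ℝ (Fin n)) :=
      {y | y ∈ Ssg ∧ ∃ x, x ∈ T ∧ dist x y < ρ} with hYdef
    obtain ⟨u, huY, hdisj, hcov⟩ :=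
      Vitali.exists_disjoint_subfamily_covering_enlargement_closedBall Y (fun a => a)
        (fun _ => ρ) ρ (fun a _ => le_rfl) 4 (by norm_num)
    have hucnt : u.Countable := by
      refine hdisj.countable_of_nonempty_interior fun b _ => ?_
      exact ⟨b, ball_subset_interior_closedBall (mem_ball_self hρ)⟩
    have hTcov : T ⊆ ⋃ b ∈ u, (S ∩ ball b (5 * ρ)) := by
      rintro a ⟨⟨hat, haD⟩, haS⟩
      obtain ⟨y, hySsg, hyd⟩ := mem_thickening_iff.1 hat
      have hyY : y ∈ Y := ⟨hySsg, a, ⟨⟨hat, haD⟩, haS⟩, hyd⟩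
      obtain ⟨b, hbu, hsub⟩ := hcov y hyY
      have hab : a ∈ closedBall b (4 * ρ) := hsub (mem_closedBall.2 hyd.le)
      refine mem_biUnion hbu ⟨haS, ?_⟩
      have : dist a b ≤ 4 * ρ := hab
      exact lt_of_le_of_lt this (by linarith)
    have hball : ∀ b ∈ u, μH[(d : ℝ)] (S ∩ ball b (5 * ρ)) ≤
        ENNReal.ofReal (Ct₀ * (6 * ρ) ^ d) := by
      intro b hb
      obtain ⟨hbSsg, x, hxT, hxd⟩ := huY hb
      have hsub : S ∩ ball b (5 * ρ) ⊆ S ∩ ball x (6 * ρ) := by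
        rintro z ⟨hz1, hz2⟩
        refine ⟨hz1, mem_ball.2 ?_⟩
        have h1 : dist z b < 5 * ρ := hz2
        calc dist z x ≤ dist z b + dist b x := dist_triangle z b x
          _ < 5 * ρ + ρ := by rw [dist_comm b x]; exact add_lt_add h1 hxd
          _ = 6 * ρ := by ring
      exact le_trans (measure_mono hsub)
        (hreg x hxT.2 (6 * ρ) (by positivity) hbig).2
    -- the balls of radius ρ are disjoint and sit inside Ssg ∩ thickening (2ρ) D
    set ν := μH[(l : ℝ)].restrict (Ssg ∩ thickening (2 * ρ) D) with hν
    have hνball : ∀ b ∈ u, μH[(l : ℝ)] (Ssg ∩ ball b ρ) = ν (ball b ρ) := by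
      intro b hb
      obtain ⟨hbSsg, x, hxT, hxd⟩ := huY hb
      rw [hν, Measure.restrict_apply measurableSet_ball]
      congr 1
      have hsub := hF1 b hbSsg x hxT.1.2 hxd
      apply Subset.antisymm
      · rintro z ⟨hz1, hz2⟩
        exact ⟨hz2, hsub ⟨hz1, hz2⟩⟩
      · rintro z ⟨hz1, hz2, _⟩
        exact ⟨hz2, hz1⟩
    have hdisj' : u.PairwiseDisjoint fun b => ball b ρ :=
      hdisj.mono fun b => ball_subset_closedBall
    have hsum_l : (∑' b : u, μH[(l : ℝ)] (Ssg ∩ ball (b : EuclideanSpace ℝ (Fin n)) ρ)) ≤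
        μH[(l : ℝ)] (Ssg ∩ thickening (2 * ρ) D) := by
      have h1 : (∑' b : u, μH[(l : ℝ)] (Ssg ∩ ball (b : EuclideanSpace ℝ (Fin n)) ρ)) =
          ν (⋃ b ∈ u, ball b ρ) := by
        rw [measure_biUnion hucnt hdisj' fun b _ => measurableSet_ball]
        exact tsum_congr fun b => hνball b b.2
      rw [h1]
      calc ν (⋃ b ∈ u, ball b ρ) ≤ ν univ := measure_mono (subset_univ _)
        _ = μH[(l : ℝ)] (Ssg ∩ thickening (2 * ρ) D) := by
            rw [hν, Measure.restrict_apply_univ]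
    calc μH[(d : ℝ)] T ≤ μH[(d : ℝ)] (⋃ b ∈ u, (S ∩ ball b (5 * ρ))) := measure_mono hTcov
      _ ≤ ∑' b : u, μH[(d : ℝ)] (S ∩ ball (b : EuclideanSpace ℝ (Fin n)) (5 * ρ)) :=
          measure_biUnion_le _ hucnt _
      _ ≤ ∑' b : u, ENNReal.ofReal (M * ρ ^ (d - l)) *
            μH[(l : ℝ)] (Ssg ∩ ball (b : EuclideanSpace ℝ (Fin n)) ρ) := by
          refine ENNReal.tsum_le_tsum fun b => ?_
          refine le_trans (hball b b.2) ?_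
          have hb1 : ENNReal.ofReal (Ct₀ * (6 * ρ) ^ d) ≤
              ENNReal.ofReal (M * ρ ^ (d - l)) * ENNReal.ofReal (C⁻¹ * ρ ^ l) := by
            rw [← ENNReal.ofReal_mul (by positivity), hscal]
            apply ENNReal.ofReal_le_ofReal
            have hx : (0:ℝ) ≤ (16 ^ n - 1) * (Ct₀ * (6 * ρ) ^ d) :=
              mul_nonneg (by linarith) (by positivity)
            nlinarith [hx]
          refine le_trans hb1 ?_
          exact mul_le_mul_right (hF2 _ (huY b.2).1) _
      _ = ENNReal.ofReal (M * ρ ^ (d - l)) *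
            ∑' b : u, μH[(l : ℝ)] (Ssg ∩ ball (b : EuclideanSpace ℝ (Fin n)) ρ) :=
          ENNReal.tsum_mul_left
      _ ≤ ENNReal.ofReal (M * ρ ^ (d - l)) * μH[(l : ℝ)] (Ssg ∩ thickening (2 * ρ) D) := by
          gcongr
  · -- degenerate case : small diameter
    push_neg at hbig
    have hdne : EMetric.diam S ≠ ⊤ := (hbig.trans ENNReal.ofReal_lt_top).ne
    obtain ⟨t, htnn, hdiam⟩ : ∃ t : ℝ, 0 ≤ t ∧ EMetric.diam S = ENNReal.ofReal t :=
      ⟨(EMetric.diam S).toReal, ENNReal.toReal_nonneg, (ENNReal.ofReal_toReal hdne).symm⟩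
    have ht6 : t ≤ 6 * ρ :=
      le_of_lt ((ENNReal.ofReal_lt_ofReal_iff (by positivity)).1 (hdiam ▸ hbig))
    have hRHS : ENNReal.ofReal (C⁻¹ * ρ ^ l) ≤ μH[(l : ℝ)] (Ssg ∩ thickening (2 * ρ) D) := by
      refine le_trans (hF2 y₀ hy₀Ssg) (measure_mono ?_)
      exact hF1 y₀ hy₀Ssg x₀ hx₀D hy₀d
    rcases htnn.eq_or_lt with ht0 | ht0
    · -- diameter 0 : S is a subsingleton and d ≥ 1, so the measure vanishes
      have hd0 : EMetric.diam S = 0 := by rw [hdiam, ← ht0, ENNReal.ofReal_zero]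
      have hsub : S.Subsingleton := EMetric.diam_eq_zero_iff.1 hd0
      haveI := MeasureTheory.Measure.noAtoms_hausdorff (EuclideanSpace ℝ (Fin n))
        (show (0 : ℝ) < (d : ℝ) by exact_mod_cast hd1)
      have hT0 : μH[(d : ℝ)] T ≤ μH[(d : ℝ)] ({x₀} : Set (EuclideanSpace ℝ (Fin n))) :=
        measure_mono fun z hz => hsub hz.2 hx₀S
      rw [measure_singleton] at hT0
      exact le_trans (le_antisymm hT0 zero_le).le zero_le
    · -- 0 < t : use the counting lemma
      have hcount := aux_count_19 (n := n) (d := d) Ct₀ ht0 hdiam hx₀S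
        (fun x hx r hr hrd => (hreg x hx r hr hrd).2)
      calc μH[(d : ℝ)] T ≤ μH[(d : ℝ)] S := measure_mono fun z hz => hz.2
        _ ≤ (16 : ℝ≥0∞) ^ n * ENNReal.ofReal (Ct₀ * t ^ d) := hcount
        _ ≤ ENNReal.ofReal (M * ρ ^ (d - l)) * ENNReal.ofReal (C⁻¹ * ρ ^ l) := by
            rw [← ENNReal.ofReal_mul (by positivity), hscal,
              show ((16 : ℝ≥0∞)) ^ n = ENNReal.ofReal ((16 : ℝ) ^ n) by
                rw [ENNReal.ofReal_pow (by norm_num : (0:ℝ) ≤ 16)]; norm_num,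
              ← ENNReal.ofReal_mul (by positivity)]
            apply ENNReal.ofReal_le_ofReal
            have h1 : t ^ d ≤ (6 * ρ) ^ d := pow_le_pow_left₀ htnn ht6 d
            have h2 : (0:ℝ) ≤ 16 ^ n * Ct₀ := by positivity
            nlinarith [mul_le_mul_of_nonneg_left h1 h2]
        _ ≤ ENNReal.ofReal (M * ρ ^ (d - l)) * μH[(l : ℝ)] (Ssg ∩ thickening (2 * ρ) D) := by
            gcongr

end
end
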